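/- Let p be a prime number, let r and s be positive integers, let B and e be positive real constants, and let H be a finite group with a normal subgroup F such that the quotient H/F is abelian and generated by r elements. Suppose that |F| ≤ B·|F_p|^e, where F_p is a p-Sylow subgroup of F, and that F is generated by s elements. Then H contains a characteristic abelian subgroup of order coprime to p and of index at most B^{r+s}·|H_p|^{e(r+s)+1}, where H_p is a p-Sylow subgroup of H. -/

import Mathlib

/-- Let `1 → F → H → H̄ → 1` be an exact sequence of finite groups with `H̄` abelian and
generated by `r` elements. If `|F| ≤ B * |F_p|^e` and `F` is generated by `s` elements, then
`H` contains a characteristic abelian subgroup of order coprime to `p` and index at most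
`B^(r+s) * |H_p|^(e(r+s)+1)`. -/
theorem characteristic_abelian_of_abelian_quotient
    (p : ℕ) (hp : p.Prime) (r s : ℕ) (hr : 0 < r) (hs : 0 < s)
    (B e : ℝ) (hB : 0 < B) (he : 0 < e)
    (H : Type*) [Group H] [Finite H]
    (F : Subgroup H) (hF : F.Normal)
    (habelian : ∀ a b : H ⧸ F, a * b = b * a)
    (hgenQ : ∃ S : Finset (H ⧸ F), S.card ≤ r ∧
      Subgroup.closure (S : Set (H ⧸ F)) = ⊤)
    (hcard : ∀ Fp : Sylow p ↥F, (Nat.card F : ℝ) ≤ B * (Nat.card Fp : ℝ) ^ e)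
    (hgenF : ∃ S : Finset ↥F, S.card ≤ s ∧ Subgroup.closure (S : Set ↥F) = ⊤)
    (Hp : Sylow p H) :
    ∃ A : Subgroup H, A.Characteristic ∧ IsMulCommutative A ∧
      Nat.Coprime (Nat.card A) p ∧
      (A.index : ℝ) ≤ B ^ (r + s) * (Nat.card Hp : ℝ) ^ (e * (r + s) + 1) := by
  haveI := Fact.mk hp
  classical
  obtain ⟨T, hTcard, hTgen⟩ := hgenQ
  obtain ⟨SF, hSFcard, hSFgen⟩ := hgenF
  set Z := Subgroup.center H with hZdef
  -- The subgroup `A`: elements of the center of order coprime to `p`.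
  let A : Subgroup H :=
  { carrier := {x | x ∈ Z ∧ (orderOf x).Coprime p}
    one_mem' := ⟨Z.one_mem, by simp⟩
    mul_mem' := by
      rintro x y ⟨hxZ, hxp⟩ ⟨hyZ, hyp⟩
      refine ⟨Z.mul_mem hxZ hyZ, ?_⟩
      have hcomm : Commute x y := (Subgroup.mem_center_iff.mp hxZ y).symm
      have h1 : orderOf (x * y) ∣ orderOf x * orderOf y :=
        hcomm.orderOf_mul_dvd_lcm.trans (Nat.lcm_dvd_mul _ _)
      exact Nat.Coprime.coprime_dvd_left h1 (Nat.Coprime.mul hxp hyp)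
    inv_mem' := by
      rintro x ⟨hxZ, hxp⟩
      exact ⟨Z.inv_mem hxZ, by simpa using hxp⟩ }
  have hmemA : ∀ x : H, x ∈ A ↔ x ∈ Z ∧ (orderOf x).Coprime p := fun x => Iff.rfl
  have hAleZ : A ≤ Z := fun x hx => ((hmemA x).mp hx).1
  refine ⟨A, ?_, ?_, ?_, ?_⟩
  · -- characteristic
    rw [Subgroup.characteristic_iff_comap_eq]
    intro φ
    ext x
    have horder : orderOf (φ x) = orderOf x := orderOf_injective φ.toMonoidHom φ.injective x
    have hZfix : Z.comap φ.toMonoidHom = Z :=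
      Subgroup.characteristic_iff_comap_eq.mp inferInstance φ
    have hZiff : φ x ∈ Z ↔ x ∈ Z := by
      conv_rhs => rw [← hZfix]
      simp [Subgroup.mem_comap]
    simp only [Subgroup.mem_comap, hmemA, MulEquiv.coe_toMonoidHom, horder]
    exact and_congr hZiff Iff.rfl
  · -- commutative
    exact ⟨⟨fun a b => Subtype.ext ((Subgroup.mem_center_iff.mp (hAleZ a.2) b).symm)⟩⟩
  · -- coprime cardinality
    by_contra hcop
    have hdvd : p ∣ Nat.card A := by
      by_contra hnd
      exact hcop (Nat.Coprime.symm (hp.coprime_iff_not_dvd.mpr hnd))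
    obtain ⟨a, ha⟩ := exists_prime_orderOf_dvd_card' (G := ↥A) p hdvd
    have : orderOf (a : H) = p := by
      rw [← ha]
      exact orderOf_injective A.subtype Subtype.coe_injective a
    have hcopr := ((hmemA _).mp a.2).2
    rw [this] at hcopr
    rw [Nat.Coprime, Nat.gcd_self] at hcopr
    exact hp.one_lt.ne' hcopr
  · -- index bound
    set cF : ℕ := Nat.card F with hcF
    set cHp : ℕ := Nat.card Hp with hcHp
    have hcFpos : 0 < cF := Nat.card_pos
    have hcHpos : 0 < Nat.card H := Nat.card_pos
    -- the generating set of H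
    set Sset : Set H := (F.subtype '' (SF : Set ↥F)) ∪ ((fun t : H ⧸ F => t.out) '' (T : Set (H ⧸ F))) with hSset
    have hFle : F ≤ Subgroup.closure Sset := by
      have h1 : Subgroup.closure (F.subtype '' (SF : Set ↥F)) = F := by
        rw [← MonoidHom.map_closure, hSFgen, ← MonoidHom.range_eq_map, Subgroup.range_subtype]
      calc F = Subgroup.closure (F.subtype '' (SF : Set ↥F)) := h1.symm
        _ ≤ Subgroup.closure Sset := Subgroup.closure_mono Set.subset_union_left
    have hStop : Subgroup.closure Sset = ⊤ := by
      have hmap : Subgroup.map (QuotientGroup.mk' F) (Subgroup.closure Sset) = ⊤ := by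
        rw [eq_top_iff, ← hTgen, MonoidHom.map_closure]
        apply Subgroup.closure_mono
        rintro t ht
        exact ⟨t.out, Or.inr ⟨t, ht, rfl⟩, QuotientGroup.out_eq' t⟩
      have hcm := Subgroup.comap_map_eq (QuotientGroup.mk' F) (Subgroup.closure Sset)
      rw [hmap, Subgroup.comap_top, QuotientGroup.ker_mk'] at hcm
      rw [eq_top_iff, hcm]
      exact sup_le le_rfl hFle
    have hcent : Subgroup.centralizer Sset = Z := by
      apply le_antisymm
      · intro u hu
        rw [hZdef, Subgroup.mem_center_iff]
        intro g
        have hg : g ∈ Subgroup.closure Sset := hStop ▸ Subgroup.mem_top g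
        induction hg using Subgroup.closure_induction with
        | mem x hx => exact Subgroup.mem_centralizer_iff.mp hu x hx
        | one => rw [one_mul, mul_one]
        | mul x y hx hy ihx ihy => rw [mul_assoc, ihy, ← mul_assoc, ihx, mul_assoc]
        | inv x hx ihx => exact Commute.inv_left ihx
      · exact Subgroup.center_le_centralizer Sset
    -- elements needed for the embedding
    have hconjF : ∀ z x : H, x ∈ F → z⁻¹ * x * z ∈ F := by
      intro z x hx
      simpa using hF.conj_mem x hx z⁻¹
    have hcommF : ∀ z h : H, z⁻¹ * h⁻¹ * z * h ∈ F := by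
      intro z h
      open scoped commutatorElement in
      have hc : (⁅z⁻¹, h⁻¹⁆ : H) = z⁻¹ * h⁻¹ * z * h := by
        simp [commutatorElement_def, mul_assoc]
      open scoped commutatorElement in
      have h2 : ((⁅z⁻¹, h⁻¹⁆ : H) : H ⧸ F) = 1 := by
        have h3 : ((⁅z⁻¹, h⁻¹⁆ : H) : H ⧸ F) =
            ⁅((z⁻¹ : H) : H ⧸ F), ((h⁻¹ : H) : H ⧸ F)⁆ := by
          simp [commutatorElement_def]
        rw [h3]
        exact commutatorElement_eq_one_iff_commute.mpr (habelian _ _)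
      rw [← hc]
      exact (QuotientGroup.eq_one_iff _).mp h2
    let f : H → (({x // x ∈ SF} → ↥F) × ({t // t ∈ T} → ↥F)) := fun z =>
      (fun i => ⟨z⁻¹ * (i.1 : H) * z, hconjF z _ i.1.2⟩,
       fun t => ⟨z⁻¹ * (t.1.out)⁻¹ * z * t.1.out, hcommF z t.1.out⟩)
    have hginj : Function.Injective (fun q : H ⧸ Z => f q.out) := by
      intro q q' hqq
      simp only [f, Prod.mk.injEq] at hqq
      obtain ⟨h1, h2⟩ := hqq
      set z := q.out with hz
      set z' := q'.out with hz'
      have hkey : ∀ a : H, z⁻¹ * a * z = z'⁻¹ * a * z' →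
          a * (z' * z⁻¹) = (z' * z⁻¹) * a := by
        intro a ha
        have h3 := congrArg (fun w => z' * w * z⁻¹) ha
        calc a * (z' * z⁻¹) = z' * (z'⁻¹ * a * z') * z⁻¹ := by group
          _ = z' * (z⁻¹ * a * z) * z⁻¹ := h3.symm
          _ = (z' * z⁻¹) * a := by group
      have hu : z' * z⁻¹ ∈ Subgroup.centralizer Sset := by
        rw [Subgroup.mem_centralizer_iff]
        rintro x (⟨i, hi, rfl⟩ | ⟨t, ht, rfl⟩)
        · have h4 := congrFun h1 ⟨i, hi⟩
          have h5 : z⁻¹ * (i : H) * z = z'⁻¹ * (i : H) * z' := by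
            simpa [Subtype.ext_iff] using h4
          exact hkey _ h5
        · have h4 := congrFun h2 ⟨t, ht⟩
          have h5 : z⁻¹ * (t.out)⁻¹ * z * t.out = z'⁻¹ * (t.out)⁻¹ * z' * t.out := by
            simpa [Subtype.ext_iff] using h4
          have h6 : z⁻¹ * (t.out)⁻¹ * z = z'⁻¹ * (t.out)⁻¹ * z' := mul_right_cancel h5
          have h7 := hkey _ h6
          have h8 : Commute (t.out)⁻¹ (z' * z⁻¹) := h7
          simpa [Commute, SemiconjBy] using h8.inv_left
      have huZ : z' * z⁻¹ ∈ Z := hcent ▸ hu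
      have huZ2 : z⁻¹ * z' ∈ Z := by
        have h9 : z⁻¹ * z' = z⁻¹ * ((z' * z⁻¹) * z) := by group
        have h10 := Subgroup.mem_center_iff.mp huZ z
        rw [h9, ← h10, inv_mul_cancel_left]
        exact huZ
      rw [← QuotientGroup.out_eq' q, ← QuotientGroup.out_eq' q']
      exact QuotientGroup.eq.mpr huZ2
    -- bound on the index of the center
    have hcardSF : Nat.card {x // x ∈ SF} = SF.card := by
      simp [Nat.card_eq_fintype_card]
    have hcardT : Nat.card {t // t ∈ T} = T.card := by
      simp [Nat.card_eq_fintype_card]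
    have hZcard : Z.index ≤ cF ^ (r + s) := by
      have h1 : Z.index = Nat.card (H ⧸ Z) := Subgroup.index_eq_card Z
      have h2 : Nat.card (H ⧸ Z) ≤
          Nat.card (({x // x ∈ SF} → ↥F) × ({t // t ∈ T} → ↥F)) :=
        Nat.card_le_card_of_injective _ hginj
      have h3 : Nat.card (({x // x ∈ SF} → ↥F) × ({t // t ∈ T} → ↥F))
          = cF ^ SF.card * cF ^ T.card := by
        rw [Nat.card_prod, Nat.card_fun, Nat.card_fun, hcardSF, hcardT]
      have h4 : cF ^ SF.card * cF ^ T.card ≤ cF ^ s * cF ^ r :=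
        Nat.mul_le_mul (Nat.pow_le_pow_right hcFpos hSFcard)
          (Nat.pow_le_pow_right hcFpos hTcard)
      rw [h1]
      calc Nat.card (H ⧸ Z) ≤ cF ^ SF.card * cF ^ T.card := h3 ▸ h2
        _ ≤ cF ^ s * cF ^ r := h4
        _ = cF ^ (r + s) := by rw [← pow_add, add_comm]
    -- bound on the relative index of A in Z
    have hrel : A.relIndex Z ≤ cHp := by
      have hPQ : IsPGroup p (↥Z ⧸ A.subgroupOf Z) := by
        intro g
        refine QuotientGroup.induction_on g ?_
        intro z
        refine ⟨(orderOf (z : H)).factorization p, ?_⟩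
        rw [← QuotientGroup.mk_pow, QuotientGroup.eq_one_iff, Subgroup.mem_subgroupOf]
        have hcoe : ((z ^ p ^ (orderOf (z : H)).factorization p : ↥Z) : H)
            = (z : H) ^ p ^ (orderOf (z : H)).factorization p := by
          push_cast; rfl
        rw [hmemA, hcoe]
        have hn0 : orderOf (z : H) ≠ 0 := (orderOf_pos (z : H)).ne'
        constructor
        · exact Z.pow_mem z.2 _
        · rw [orderOf_pow, Nat.gcd_eq_right (Nat.ordProj_dvd _ p)]
          exact (Nat.coprime_ordCompl hp hn0).symm
      obtain ⟨k, hk⟩ := IsPGroup.iff_card.mp hPQ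
      have hrel_eq : A.relIndex Z = Nat.card (↥Z ⧸ A.subgroupOf Z) :=
        Subgroup.index_eq_card (A.subgroupOf Z)
      have hdvd1 : Nat.card (↥Z ⧸ A.subgroupOf Z) ∣ Nat.card ↥Z :=
        Dvd.intro _ (Subgroup.card_eq_card_quotient_mul_card_subgroup (A.subgroupOf Z)).symm
      have hdvd2 : Nat.card (↥Z ⧸ A.subgroupOf Z) ∣ Nat.card H :=
        hdvd1.trans (Subgroup.card_subgroup_dvd_card Z)
      rw [hk] at hdvd2
      have hle : k ≤ (Nat.card H).factorization p :=
        (Nat.Prime.pow_dvd_iff_le_factorization hp hcHpos.ne').mp hdvd2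
      have hHpcard : cHp = p ^ (Nat.card H).factorization p := Sylow.card_eq_multiplicity Hp
      rw [hrel_eq, hk, hHpcard]
      exact Nat.pow_le_pow_right hp.pos hle
    -- Sylow subgroup of F is at most the Sylow subgroup of H
    obtain ⟨Fp⟩ : Nonempty (Sylow p ↥F) := Sylow.nonempty
    have hFpHp : Nat.card Fp ≤ cHp := by
      have hFpcard : Nat.card Fp = p ^ (Nat.card ↥F).factorization p :=
        Sylow.card_eq_multiplicity Fp
      have hHpcard : cHp = p ^ (Nat.card H).factorization p := Sylow.card_eq_multiplicity Hp
      have hFdvd : Nat.card ↥F ∣ Nat.card H := Subgroup.card_subgroup_dvd_card F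
      have hfac : (Nat.card ↥F).factorization p ≤ (Nat.card H).factorization p := by
        have h10 := (Nat.factorization_le_iff_dvd hcFpos.ne' hcHpos.ne').mpr hFdvd
        exact h10 p
      rw [hFpcard, hHpcard]
      exact Nat.pow_le_pow_right hp.pos hfac
    -- assemble
    have hNat : A.index ≤ cHp * cF ^ (r + s) := by
      rw [← Subgroup.relIndex_mul_index hAleZ]
      exact Nat.mul_le_mul hrel hZcard
    have hcHp0 : (0:ℝ) < (cHp : ℝ) := by exact_mod_cast Nat.card_pos
    have hFB : (cF : ℝ) ≤ B * (cHp : ℝ) ^ e := by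
      refine (hcard Fp).trans ?_
      have h11 : ((Nat.card Fp : ℕ) : ℝ) ^ e ≤ (cHp : ℝ) ^ e :=
        Real.rpow_le_rpow (Nat.cast_nonneg _) (by exact_mod_cast hFpHp) he.le
      exact mul_le_mul_of_nonneg_left h11 hB.le
    calc (A.index : ℝ) ≤ (cHp : ℝ) * (cF : ℝ) ^ (r + s) := by exact_mod_cast hNat
      _ ≤ (cHp : ℝ) * (B * (cHp : ℝ) ^ e) ^ (r + s) := by
          refine mul_le_mul_of_nonneg_left ?_ hcHp0.le
          exact pow_le_pow_left₀ (Nat.cast_nonneg _) hFB _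
      _ = B ^ (r + s) * (cHp : ℝ) ^ (e * (r + s) + 1) := by
          rw [mul_pow, ← Real.rpow_natCast ((cHp : ℝ) ^ e) (r + s),
            ← Real.rpow_mul hcHp0.le, Real.rpow_add_one hcHp0.ne']
          push_cast
          ring
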